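/- Let L be a (possibly unbounded) self-adjoint operator on a complex Hilbert space H with dense domain D(L), and let (P_n) be a sequence of orthogonal projections P_n : H → V_n onto closed subspaces V_n ⊆ D(L), each of whose compressions P_n L P_n* is a self-adjoint operator on V_n (automatic when V_n is finite-dimensional), such that P_n* P_n converges strongly to the identity. Suppose there exists a core S ⊆ D(L) for L such that lim_{n→∞} L P_n* P_n u = L u and lim_{n→∞} P_n* P_n u = u for every u ∈ S. Then for every z ∈ ℂ \ ℝ and every v ∈ H, lim_{n→∞} P_n* [P_n (L − zI) P_n*]^{−1} P_n v = (L − zI)^{−1} v in the norm of H. -/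

import Mathlib

open MeasureTheory Filter
open scoped InnerProductSpace ComplexConjugate

section Aux
variable {K : Type*} [NormedAddCommGroup K] [InnerProductSpace ℂ K]

lemma aux_inner_low {u x : K} (hre : (⟪u, x⟫_ℂ).im = 0) (z : ℂ) :
    |z.im| * ‖x‖ ^ 2 ≤ ‖(⟪u - z • x, x⟫_ℂ)‖ := by
  have h1 : (⟪u - z • x, x⟫_ℂ) = ⟪u, x⟫_ℂ - conj z * ((‖x‖ : ℂ)) ^ 2 := by
    rw [inner_sub_left, inner_smul_left, inner_self_eq_norm_sq_to_K]; norm_num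
  have him : (⟪u - z • x, x⟫_ℂ).im = z.im * ‖x‖ ^ 2 := by
    rw [h1]
    simp [Complex.sub_im, Complex.mul_im, hre, ← Complex.ofReal_pow]
  have h2 : |(⟪u - z • x, x⟫_ℂ).im| ≤ ‖(⟪u - z • x, x⟫_ℂ)‖ :=
    Complex.abs_im_le_norm _
  rw [him] at h2
  calc |z.im| * ‖x‖ ^ 2 = |z.im * ‖x‖ ^ 2| := by
        rw [abs_mul, abs_of_nonneg (by positivity : (0:ℝ) ≤ ‖x‖ ^ 2)]
    _ ≤ _ := h2

lemma aux_low {u x : K} (hre : (⟪u, x⟫_ℂ).im = 0) (z : ℂ) :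
    |z.im| * ‖x‖ ≤ ‖u - z • x‖ := by
  have h1 := aux_inner_low hre z
  have h2 : ‖(⟪u - z • x, x⟫_ℂ)‖ ≤ ‖u - z • x‖ * ‖x‖ := norm_inner_le_norm _ _
  rcases (norm_nonneg x).eq_or_lt' with h0 | h0
  · rw [h0, mul_zero]; positivity
  · nlinarith

lemma aux_isUnit [CompleteSpace K] (Aop : K →L[ℂ] K) (hA : IsSelfAdjoint Aop) {z : ℂ}
    (hz : z.im ≠ 0) : IsUnit (Aop - z • (1 : K →L[ℂ] K)) := by
  have hsym := hA.isSymmetric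
  refine ContinuousLinearMap.isUnit_of_forall_le_norm_inner_map _
    (c := ⟨|z.im|, abs_nonneg _⟩) (by exact_mod_cast abs_pos.mpr hz) fun x => ?_
  have hre : (⟪Aop x, x⟫_ℂ).im = 0 := by
    refine Complex.conj_eq_iff_im.mp ?_
    rw [inner_conj_symm]
    exact (hsym x x).symm
  have := aux_inner_low hre z
  have hEq : (Aop - z • (1 : K →L[ℂ] K)) x = Aop x - z • x := by
    simp [ContinuousLinearMap.sub_apply]
  rw [hEq]
  calc ‖x‖ ^ 2 * (⟨|z.im|, abs_nonneg _⟩ : NNReal) = |z.im| * ‖x‖ ^ 2 := by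
        simp [mul_comm]
    _ ≤ _ := this

lemma aux_opLow [CompleteSpace K] (Aop : K →L[ℂ] K) (hA : IsSelfAdjoint Aop) (z : ℂ) (x : K) :
    |z.im| * ‖x‖ ≤ ‖(Aop - z • (1 : K →L[ℂ] K)) x‖ := by
  have hre : (⟪Aop x, x⟫_ℂ).im = 0 := by
    refine Complex.conj_eq_iff_im.mp ?_
    rw [inner_conj_symm]
    exact (hA.isSymmetric x x).symm
  have hEq : (Aop - z • (1 : K →L[ℂ] K)) x = Aop x - z • x := by
    simp [ContinuousLinearMap.sub_apply]
  rw [hEq]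
  exact aux_low hre z

lemma aux_inv_bound [CompleteSpace K] (Aop : K →L[ℂ] K) (hA : IsSelfAdjoint Aop) {z : ℂ}
    (hz : z.im ≠ 0) (y : K) :
    ‖Ring.inverse (Aop - z • (1 : K →L[ℂ] K)) y‖ ≤ ‖y‖ / |z.im| := by
  have hu := aux_isUnit Aop hA hz
  set B := Aop - z • (1 : K →L[ℂ] K) with hB
  have h1 : B (Ring.inverse B y) = y := by
    have h2 : B * Ring.inverse B = 1 := Ring.mul_inverse_cancel _ hu
    calc B (Ring.inverse B y) = (B * Ring.inverse B) y := rfl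
      _ = y := by rw [h2]; rfl
  have h3 := aux_opLow Aop hA z (Ring.inverse B y)
  rw [← hB, h1] at h3
  rw [le_div_iff₀ (abs_pos.mpr hz)]
  linarith

end Aux

theorem hermitianDMD_stmt3 {H : Type*} [NormedAddCommGroup H] [InnerProductSpace ℂ H]
    [CompleteSpace H]
    -- `T` is a (possibly unbounded) self-adjoint operator with dense domain
    (T : H →ₗ.[ℂ] H) (hTsa : IsSelfAdjoint T)
    -- `R z` is the resolvent `(T - z I)⁻¹` of `T` at a non-real point `z`
    (R : ℂ → H →L[ℂ] H)
    (hR : ∀ z : ℂ, z.im ≠ 0 →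
      (∀ x : T.domain, R z (T x - z • (x : H)) = x) ∧
      (∀ w : H, ∃ h : R z w ∈ T.domain, T ⟨R z w, h⟩ - z • R z w = w))
    -- the closed subspaces `Vₙ ⊆ D(T)`
    (V : ℕ → Submodule ℂ H) [∀ n, CompleteSpace (V n)] (hV : ∀ n, V n ≤ T.domain)
    -- `Pₙ* Pₙ` converges strongly to the identity
    (hP : ∀ u : H, Tendsto (fun n => ((Submodule.orthogonalProjectionOnto (V n) u : V n) : H)) atTop (nhds u))
    -- `A n` is the compression `Pₙ T Pₙ*`, assumed self-adjoint on `Vₙ`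
    (A : (n : ℕ) → (V n →L[ℂ] V n))
    (hA : ∀ (n : ℕ) (x : V n), A n x =
      Submodule.orthogonalProjectionOnto (V n) (T ⟨(x : H), hV n x.2⟩))
    (hAsa : ∀ n, IsSelfAdjoint (A n))
    -- `S` is a core of `T`: the closure of the restriction of `T` to `S` is `T`
    (S : Submodule ℂ H) (hS : S ≤ T.domain)
    (hcore : ∀ (x : T.domain) (ε : ℝ), 0 < ε →
      ∃ s, ∃ hs : s ∈ S, ‖s - (x : H)‖ < ε ∧ ‖T ⟨s, hS hs⟩ - T x‖ < ε)
    -- Assumption: `T Pₙ* Pₙ u → T u` and `Pₙ* Pₙ u → u` for all `u ∈ S`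
    (hTP : ∀ u, ∀ hu : u ∈ S,
      Tendsto
        (fun n => T ⟨((Submodule.orthogonalProjectionOnto (V n) u : V n) : H),
          hV n (Submodule.orthogonalProjectionOnto (V n) u).2⟩)
        atTop (nhds (T ⟨u, hS hu⟩)))
    (hPu : ∀ u ∈ S, Tendsto (fun n => ((Submodule.orthogonalProjectionOnto (V n) u : V n) : H)) atTop (nhds u)) :
    -- conclusion: strong convergence of the resolvents
    ∀ z : ℂ, z.im ≠ 0 → ∀ v : H,
      Tendsto
        (fun n => (V n).subtypeL
          (Ring.inverse (A n - z • (1 : V n →L[ℂ] V n)) (Submodule.orthogonalProjectionOnto (V n) v)))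
        atTop (nhds (R z v)) := by
  have hTT : T.adjoint = T := hTsa
  have hsym : ∀ x y : T.domain, ⟪T x, (y : H)⟫_ℂ = ⟪(x : H), T y⟫_ℂ := by
    have h := LinearPMap.adjoint_isFormalAdjoint (T := T) hTsa.dense_domain
    rw [hTT] at h
    exact h
  intro z hz v
  have hm0 : (0:ℝ) < |z.im| := abs_pos.mpr hz
  have hTlow : ∀ x : T.domain, |z.im| * ‖(x : H)‖ ≤ ‖T x - z • (x : H)‖ := by
    intro x
    have hre : (⟪T x, (x : H)⟫_ℂ).im = 0 := by
      refine Complex.conj_eq_iff_im.mp ?_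
      rw [inner_conj_symm]
      exact (hsym x x).symm
    exact aux_low hre z
  have hRb : ∀ w : H, ‖R z w‖ ≤ ‖w‖ / |z.im| := by
    intro w
    obtain ⟨h, hw⟩ := (hR z hz).2 w
    have h3 := hTlow ⟨R z w, h⟩
    rw [hw] at h3
    rw [le_div_iff₀ hm0]
    simpa [mul_comm] using h3
  set f : ℕ → H → H := fun n x => (V n).subtypeL
      (Ring.inverse (A n - z • (1 : V n →L[ℂ] V n)) (Submodule.orthogonalProjectionOnto (V n) x)) with hf
  show Tendsto (fun n => f n v) atTop (nhds (R z v))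
  have hfsub : ∀ (n : ℕ) (x y : H), f n x - f n y = f n (x - y) := by
    intro n x y
    simp only [hf, ← map_sub]
  have hfb : ∀ (n : ℕ) (x : H), ‖f n x‖ ≤ ‖x‖ / |z.im| := by
    intro n x
    have h1 : ‖f n x‖ = ‖Ring.inverse (A n - z • (1 : V n →L[ℂ] V n))
        (Submodule.orthogonalProjectionOnto (V n) x)‖ := rfl
    rw [h1]
    refine (aux_inv_bound (A n) (hAsa n) hz _).trans ?_
    gcongr
    calc ‖Submodule.orthogonalProjectionOnto (V n) x‖ ≤ ‖(Submodule.orthogonalProjectionOnto (V n) : H →L[ℂ] V n)‖ * ‖x‖ :=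
          (Submodule.orthogonalProjectionOnto (V n)).le_opNorm x
      _ ≤ 1 * ‖x‖ := by
          exact mul_le_mul_of_nonneg_right (Submodule.orthogonalProjectionOnto_norm_le _) (norm_nonneg x)
      _ = ‖x‖ := one_mul _
  -- Step B : convergence on (T - z) S
  have hstep : ∀ s (hs : s ∈ S),
      Tendsto (fun n => f n (T ⟨s, hS hs⟩ - z • s)) atTop (nhds s) := by
    intro s hs
    set w : H := T ⟨s, hS hs⟩ - z • s with hw
    set qfun : ℕ → H := fun n => ((Submodule.orthogonalProjectionOnto (V n) s : V n) : H) with hq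
    set wfun : ℕ → H := fun n =>
      T ⟨qfun n, hV n (Submodule.orthogonalProjectionOnto (V n) s).2⟩ - z • qfun n with hwfun
    have hkey : ∀ n, Ring.inverse (A n - z • (1 : V n →L[ℂ] V n))
        (Submodule.orthogonalProjectionOnto (V n) (wfun n)) = Submodule.orthogonalProjectionOnto (V n) s := by
      intro n
      set u := Submodule.orthogonalProjectionOnto (V n) s with hu
      have hPw : Submodule.orthogonalProjectionOnto (V n) (wfun n)
          = (A n - z • (1 : V n →L[ℂ] V n)) u := by
        rw [hwfun]
        simp only [map_sub, _root_.map_smul]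
        rw [← hA n u]
        have : Submodule.orthogonalProjectionOnto (V n) (qfun n) = u := by
          rw [hq]
          exact Submodule.orthogonalProjectionOnto_mem_subspace_eq_self u
        rw [this]
        simp [ContinuousLinearMap.sub_apply]
      rw [hPw]
      have h2 : Ring.inverse (A n - z • (1 : V n →L[ℂ] V n))
          * (A n - z • (1 : V n →L[ℂ] V n)) = 1 :=
        Ring.inverse_mul_cancel _ (aux_isUnit (A n) (hAsa n) hz)
      calc Ring.inverse (A n - z • (1 : V n →L[ℂ] V n)) ((A n - z • (1 : V n →L[ℂ] V n)) u)
          = (Ring.inverse (A n - z • (1 : V n →L[ℂ] V n))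
              * (A n - z • (1 : V n →L[ℂ] V n))) u := rfl
        _ = u := by rw [h2]; rfl
    have hfw : ∀ n, f n (wfun n) = qfun n := by
      intro n
      show (V n).subtypeL (Ring.inverse (A n - z • (1 : V n →L[ℂ] V n))
        (Submodule.orthogonalProjectionOnto (V n) (wfun n))) = qfun n
      rw [hkey n]
      rfl
    have hdecomp : ∀ n, f n w - s = f n (w - wfun n) + (qfun n - s) := by
      intro n
      have e1 : f n w - f n (w - wfun n) = qfun n := by
        rw [hfsub, sub_sub_cancel, hfw]
      have e2 : f n w = qfun n + f n (w - wfun n) := sub_eq_iff_eq_add.mp e1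
      rw [e2]; abel
    have hnorm : ∀ n, ‖f n w - s‖ ≤ ‖w - wfun n‖ / |z.im| + ‖qfun n - s‖ := by
      intro n
      rw [hdecomp n]
      exact (norm_add_le _ _).trans (add_le_add (hfb n _) le_rfl)
    have h1 : Tendsto wfun atTop (nhds w) := by
      rw [hwfun, hw]
      exact (hTP s hs).sub ((hPu s hs).const_smul z)
    have h2 : Tendsto (fun n => ‖w - wfun n‖) atTop (nhds 0) := by
      simpa using ((tendsto_const_nhds (x := w)).sub h1).norm
    have h3 : Tendsto (fun n => ‖qfun n - s‖) atTop (nhds 0) := by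
      simpa [hq] using ((hPu s hs).sub (tendsto_const_nhds (x := s))).norm
    have h0 : Tendsto (fun n => ‖w - wfun n‖ / |z.im| + ‖qfun n - s‖) atTop (nhds 0) := by
      simpa using (h2.div_const |z.im|).add h3
    rw [tendsto_iff_norm_sub_tendsto_zero]
    exact squeeze_zero (fun n => norm_nonneg _) hnorm h0
  -- Step C : density argument
  rw [Metric.tendsto_atTop]
  intro ε hε
  obtain ⟨hd, hv0⟩ := (hR z hz).2 v
  have habs : (0:ℝ) < 1 + ‖z‖ := by positivity
  set δ : ℝ := ε * |z.im| / (3 * (1 + ‖z‖)) with hδ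
  have hδ0 : 0 < δ := by positivity
  obtain ⟨s, hs, hs1, hs2⟩ := hcore ⟨R z v, hd⟩ δ hδ0
  set w : H := T ⟨s, hS hs⟩ - z • s with hw
  have hwv : ‖w - v‖ ≤ ε * |z.im| / 3 := by
    have e : w - v = (T ⟨s, hS hs⟩ - T ⟨R z v, hd⟩) - z • (s - R z v) := by
      have e0 : (T ⟨s, hS hs⟩ - T ⟨R z v, hd⟩) - z • (s - R z v)
          = w - (T ⟨R z v, hd⟩ - z • R z v) := by
        rw [hw, smul_sub]; abel
      rw [hv0] at e0
      exact e0.symm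
    rw [e]
    calc ‖(T ⟨s, hS hs⟩ - T ⟨R z v, hd⟩) - z • (s - R z v)‖
        ≤ ‖T ⟨s, hS hs⟩ - T ⟨R z v, hd⟩‖ + ‖z • (s - R z v)‖ := norm_sub_le _ _
      _ ≤ δ + ‖z‖ * δ := by
          refine add_le_add hs2.le ?_
          rw [norm_smul]
          exact mul_le_mul_of_nonneg_left hs1.le (norm_nonneg z)
      _ = δ * (1 + ‖z‖) := by ring
      _ = ε * |z.im| / 3 := by
          rw [hδ]; field_simp
  have hRw : R z w = s := (hR z hz).1 ⟨s, hS hs⟩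
  have hconv := hstep s hs
  rw [Metric.tendsto_atTop] at hconv
  obtain ⟨N, hN⟩ := hconv (ε / 3) (by positivity)
  refine ⟨N, fun n hn => ?_⟩
  have hdm : ‖w - v‖ / |z.im| ≤ ε / 3 := by
    rw [div_le_iff₀ hm0]
    calc ‖w - v‖ ≤ ε * |z.im| / 3 := hwv
      _ = ε / 3 * |z.im| := by ring
  have h1 : ‖f n v - f n w‖ ≤ ε / 3 := by
    rw [hfsub]
    refine (hfb n _).trans ?_
    rwa [norm_sub_rev]
  have h2 : ‖f n w - s‖ < ε / 3 := by
    have := hN n hn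
    rwa [dist_eq_norm] at this
  have h3 : ‖R z w - R z v‖ ≤ ε / 3 := by
    rw [← map_sub]
    exact (hRb _).trans hdm
  rw [dist_eq_norm]
  have e : f n v - R z v = (f n v - f n w) + (f n w - s) + (R z w - R z v) := by
    rw [hRw]; abel
  rw [e]
  calc ‖(f n v - f n w) + (f n w - s) + (R z w - R z v)‖
      ≤ ‖f n v - f n w‖ + ‖f n w - s‖ + ‖R z w - R z v‖ := norm_add₃_le
    _ < ε := by linarith
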